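/- Let F be a field of characteristic not 2. The map GW(F) → K^MW_0(F) sending ⟨a⟩ ↦ 1 + η[a] is a well-defined ring isomorphism; in particular it respects the defining relations of GW(F): ⟨ab²⟩ = ⟨a⟩, ⟨a⟩ + ⟨b⟩ = ⟨a+b⟩ + ⟨(a+b)ab⟩ for a+b ≠ 0, and ⟨a⟩⟨b⟩ = ⟨ab⟩. -/

import Mathlib

/-- For a field `F` of characteristic not 2, the assignment
`⟨a⟩ ↦ 1 + η[a]` respects the defining relations of the Grothendieck–Witt ring
`GW(F)` inside `K^MW_0(F)`: `⟨ab²⟩ = ⟨a⟩`, `⟨a⟩ + ⟨b⟩ = ⟨a+b⟩ + ⟨(a+b)ab⟩` for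
`a + b ≠ 0`, and `⟨a⟩⟨b⟩ = ⟨ab⟩` (whence `GW(F) → K^MW_0(F)` is a well-defined
ring isomorphism). -/
theorem gw_relations_in_mw (F : Type*) [Field F] (hchar : (2 : F) ≠ 0)
    (R : Type*) [Ring R] (s : Fˣ → R) (η : R)
    (steinberg : ∀ a b : Fˣ, (a : F) + (b : F) = 1 → s a * s b = 0)
    (etaComm : ∀ a : Fˣ, η * s a = s a * η)
    (mulLog : ∀ a b : Fˣ, s (a * b) = s a + s b + η * s a * s b)
    (hyp : (2 + s (-1) * η) * η = 0) :
    (∀ a b : Fˣ, 1 + η * s (a * b * b) = 1 + η * s a) ∧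
    (∀ a b c : Fˣ, (c : F) = (a : F) + (b : F) →
      (1 + η * s a) + (1 + η * s b) = (1 + η * s c) + (1 + η * s (c * a * b))) ∧
    (∀ a b : Fˣ, (1 + η * s a) * (1 + η * s b) = 1 + η * s (a * b)) := by
  let Q : Fˣ → R := fun a => 1 + η * s a
  -- η commutes into products
  have swap : ∀ a b : Fˣ, η * s a * (η * s b) = η * (η * (s a * s b)) := by
    intro a b
    calc η * s a * (η * s b) = η * (s a * η) * s b := by noncomm_ring
      _ = η * (η * s a) * s b := by rw [etaComm a]
      _ = η * (η * (s a * s b)) := by noncomm_ring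
  -- multiplicativity of Q
  have Qmul : ∀ a b : Fˣ, Q a * Q b = Q (a * b) := by
    intro a b
    show (1 + η * s a) * (1 + η * s b) = 1 + η * s (a * b)
    rw [mulLog a b]
    calc (1 + η * s a) * (1 + η * s b)
        = 1 + η * s a + η * s b + η * s a * (η * s b) := by noncomm_ring
      _ = 1 + η * s a + η * s b + η * (η * (s a * s b)) := by rw [swap]
      _ = 1 + η * (s a + s b + η * s a * s b) := by noncomm_ring
  -- key consequence of the hypothesis hyp
  have keyEta : (2 + η * s (-1)) * η = 0 := by
    rw [etaComm]; exact hyp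
  have keyT : ∀ a : Fˣ, (2 + η * s (-1)) * (η * s a) = 0 := by
    intro a; rw [← mul_assoc, keyEta, zero_mul]
  -- Steinberg relation at the level of T a = η * s a
  have TT : ∀ u v : Fˣ, (u : F) + (v : F) = 1 → (η * s u) * (η * s v) = 0 := by
    intro u v h
    rw [swap, steinberg u v h, mul_zero, mul_zero]
  have Qst : ∀ u v : Fˣ, (u : F) + (v : F) = 1 → Q u * Q v = Q u + Q v - 1 := by
    intro u v h
    have h0 := TT u v h
    show (1 + η * s u) * (1 + η * s v) = (1 + η * s u) + (1 + η * s v) - 1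
    calc (1 + η * s u) * (1 + η * s v)
        = (1 + η * s u) + (1 + η * s v) - 1 + (η * s u) * (η * s v) := by noncomm_ring
      _ = (1 + η * s u) + (1 + η * s v) - 1 := by rw [h0, add_zero]
  -- Q(-1)² = 1 and Q 1 = 1
  have Qneg1 : Q (-1) * Q (-1) = 1 := by
    show (1 + η * s (-1)) * (1 + η * s (-1)) = 1
    calc (1 + η * s (-1)) * (1 + η * s (-1))
        = 1 + (2 + η * s (-1)) * (η * s (-1)) := by noncomm_ring
      _ = 1 := by rw [keyT, add_zero]
  have Q1 : Q 1 = 1 := by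
    have h : ((-1 : Fˣ) * (-1)) = 1 := by simp
    rw [← h, ← Qmul]; exact Qneg1
  have T1 : η * s 1 = 0 := by
    have h : (1 : R) + η * s 1 = 1 + 0 := by rw [add_zero]; exact Q1
    exact add_left_cancel h
  -- T u * T (-u) = 0
  have TnegU : ∀ u : Fˣ, (η * s u) * (η * s (-u)) = 0 := by
    intro u
    by_cases hu : u = 1
    · rw [hu, T1, zero_mul]
    · have hu' : (u : F) ≠ 1 := fun hh => hu (Units.ext (by simpa using hh))
      have h0 : (u : F) ≠ 0 := u.ne_zero
      have hx : (1 : F) - (u : F) ≠ 0 := sub_ne_zero.mpr (Ne.symm hu')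
      have hy : (1 : F) - (u : F)⁻¹ ≠ 0 := by
        rw [sub_ne_zero]
        exact fun hh => hu' (inv_eq_one.mp hh.symm)
      set x : Fˣ := Units.mk0 _ hx with hxdef
      set y : Fˣ := Units.mk0 _ hy with hydef
      have hst1 : (u : F) + (x : F) = 1 := by
        rw [hxdef, Units.val_mk0]; ring
      have hst2 : ((u⁻¹ : Fˣ) : F) + (y : F) = 1 := by
        rw [hydef, Units.val_mk0, Units.val_inv_eq_inv_val]; ring
      have hneg : -u = x * y⁻¹ := by
        apply Units.ext
        rw [hxdef, hydef, Units.val_mul, Units.val_neg, Units.val_inv_eq_inv_val,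
          Units.val_mk0, Units.val_mk0, eq_mul_inv_iff_mul_eq₀ hy]
        field_simp
        ring
      have h1 : (η * s u) * (η * s x) = 0 := TT u x hst1
      -- Q u * Q y⁻¹ = Q u + Q y⁻¹ - 1
      have lhs1 : Q u * (Q u⁻¹ * Q y) * Q y⁻¹ = 1 := by
        rw [Qmul, Qmul, Qmul, show u * (u⁻¹ * y) * y⁻¹ = 1 by group]
        exact Q1
      have e1 : Q u * Q u⁻¹ * Q y⁻¹ = Q y⁻¹ := by
        rw [Qmul, Qmul, show u * u⁻¹ * y⁻¹ = y⁻¹ by group]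
      have e2 : Q u * Q y * Q y⁻¹ = Q u := by
        rw [Qmul, Qmul, show u * y * y⁻¹ = u by group]
      have hA' : (1 : R) = Q y⁻¹ + Q u - Q u * Q y⁻¹ := by
        calc (1 : R) = Q u * (Q u⁻¹ * Q y) * Q y⁻¹ := lhs1.symm
          _ = Q u * (Q u⁻¹ + Q y - 1) * Q y⁻¹ := by rw [Qst u⁻¹ y hst2]
          _ = Q u * Q u⁻¹ * Q y⁻¹ + Q u * Q y * Q y⁻¹ - Q u * Q y⁻¹ := by noncomm_ring
          _ = Q y⁻¹ + Q u - Q u * Q y⁻¹ := by rw [e1, e2]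
      have hTA : (η * s u) * (η * s y⁻¹) = 0 := by
        calc (η * s u) * (η * s y⁻¹)
            = Q u * Q y⁻¹ + 1 - Q u - Q y⁻¹ := by
              show (η * s u) * (η * s y⁻¹)
                = (1 + η * s u) * (1 + η * s y⁻¹) + 1 - (1 + η * s u) - (1 + η * s y⁻¹)
              noncomm_ring
          _ = Q u * Q y⁻¹ + (Q y⁻¹ + Q u - Q u * Q y⁻¹) - Q u - Q y⁻¹ := by rw [← hA']
          _ = 0 := by abel
      have hxy : η * s (x * y⁻¹) = Q x * Q y⁻¹ - 1 := by
        rw [Qmul x y⁻¹]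
        show η * s (x * y⁻¹) = (1 + η * s (x * y⁻¹)) - 1
        noncomm_ring
      have hQxu : (η * s u) * Q x = η * s u := by
        show (η * s u) * (1 + η * s x) = η * s u
        rw [mul_add, mul_one, h1, add_zero]
      calc (η * s u) * (η * s (-u))
          = (η * s u) * (η * s (x * y⁻¹)) := by rw [hneg]
        _ = (η * s u) * (Q x * Q y⁻¹ - 1) := by rw [hxy]
        _ = ((η * s u) * Q x) * Q y⁻¹ - η * s u := by noncomm_ring
        _ = (η * s u) * Q y⁻¹ - η * s u := by rw [hQxu]
        _ = (η * s u) * (η * s y⁻¹) := by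
              show (η * s u) * (1 + η * s y⁻¹) - η * s u = _
              noncomm_ring
        _ = 0 := hTA
  -- Q (u*u) = 1
  have Qsq : ∀ u : Fˣ, Q (u * u) = 1 := by
    intro u
    have h2 : Q (-u) * Q u = Q (-u) + Q u - 1 := by
      have h0 : (η * s (-u)) * (η * s u) = 0 := by
        have := TnegU (-u)
        rwa [neg_neg] at this
      show (1 + η * s (-u)) * (1 + η * s u) = (1 + η * s (-u)) + (1 + η * s u) - 1
      calc (1 + η * s (-u)) * (1 + η * s u)
          = (1 + η * s (-u)) + (1 + η * s u) - 1 + (η * s (-u)) * (η * s u) := by noncomm_ring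
        _ = (1 + η * s (-u)) + (1 + η * s u) - 1 := by rw [h0, add_zero]
    have h1 : Q (u * u) = Q (-1) * (Q (-u) * Q u) := by
      rw [Qmul, Qmul, show (-1 : Fˣ) * (-u * u) = u * u by simp]
    have h3 : Q (-u) = Q (-1) * Q u := by
      rw [Qmul, show (-1 : Fˣ) * u = -u by simp]
    calc Q (u * u) = Q (-1) * (Q (-u) + Q u - 1) := by rw [h1, h2]
      _ = Q (-1) * Q (-u) + Q (-1) * Q u - Q (-1) := by noncomm_ring
      _ = Q u + Q (-u) - Q (-1) := by
            rw [Qmul, Qmul, show (-1 : Fˣ) * (-u) = u by simp, show (-1 : Fˣ) * u = -u by simp]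
      _ = Q u + Q (-1) * Q u - Q (-1) := by rw [h3]
      _ = 1 + (2 + η * s (-1)) * (η * s u) := by
            show (1 + η * s u) + (1 + η * s (-1)) * (1 + η * s u) - (1 + η * s (-1)) = _
            noncomm_ring
      _ = 1 := by rw [keyT, add_zero]
  refine ⟨?_, ?_, ?_⟩
  · intro a b
    show Q (a * b * b) = Q a
    rw [mul_assoc, ← Qmul, Qsq b, mul_one]
  · intro a b c h
    have hc0 : (c : F) ≠ 0 := c.ne_zero
    have hsum : ((a * c⁻¹ : Fˣ) : F) + ((b * c⁻¹ : Fˣ) : F) = 1 := by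
      rw [Units.val_mul, Units.val_mul, Units.val_inv_eq_inv_val]
      have : (a : F) * (c : F)⁻¹ + (b : F) * (c : F)⁻¹ = ((a : F) + (b : F)) * (c : F)⁻¹ := by
        ring
      rw [this, ← h, mul_inv_cancel₀ hc0]
    have hst' : Q (a * c⁻¹) + Q (b * c⁻¹) = Q (a * c⁻¹) * Q (b * c⁻¹) + 1 := by
      rw [Qst _ _ hsum]; abel
    have e1 : Q c * Q (a * c⁻¹) = Q a := by
      rw [Qmul, show c * (a * c⁻¹) = a by rw [mul_comm a c⁻¹, mul_inv_cancel_left]]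
    have e2 : Q c * Q (b * c⁻¹) = Q b := by
      rw [Qmul, show c * (b * c⁻¹) = b by rw [mul_comm b c⁻¹, mul_inv_cancel_left]]
    have e3 : Q c * (Q (a * c⁻¹) * Q (b * c⁻¹)) = Q (c * a * b) := by
      rw [Qmul, Qmul, show c * (a * c⁻¹ * (b * c⁻¹)) = c * a * b * (c⁻¹ * c⁻¹) from Units.ext (by simp only [Units.val_mul]; ring),
        ← Qmul, Qsq c⁻¹, mul_one]
    show Q a + Q b = Q c + Q (c * a * b)
    calc Q a + Q b = Q c * Q (a * c⁻¹) + Q c * Q (b * c⁻¹) := by rw [e1, e2]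
      _ = Q c * (Q (a * c⁻¹) + Q (b * c⁻¹)) := (mul_add _ _ _).symm
      _ = Q c * (Q (a * c⁻¹) * Q (b * c⁻¹) + 1) := by rw [hst']
      _ = Q c * (Q (a * c⁻¹) * Q (b * c⁻¹)) + Q c := by rw [mul_add, mul_one]
      _ = Q (c * a * b) + Q c := by rw [e3]
      _ = Q c + Q (c * a * b) := by abel
  · intro a b
    exact Qmul a b
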